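/- The cyclic subgroups generated by A and by B intersect trivially: ⟨A⟩ ∩ ⟨B⟩ = {I}, where A := G₁·G₂²·G₁⁻¹ and B := G₁·G₂⁻²·G₁. -/

import Mathlib

open Complex Matrix

/-- `t = (√2/2)·e^{2iπ/3}` -/
noncomputable def t : ℂ := ((Real.sqrt 2 : ℂ) / 2) * Complex.exp (2 * (Real.pi : ℂ) * Complex.I / 3)

/-- `G₁ = e^{iπ/9}·diag(2t̄², 2t², −2t̄²)` -/
noncomputable def G₁ : Matrix (Fin 3) (Fin 3) ℂ :=
  Complex.exp ((Real.pi : ℂ) * Complex.I / 9) •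
    Matrix.diagonal ![2 * (starRingEnd ℂ t) ^ 2, 2 * t ^ 2, -(2 * (starRingEnd ℂ t) ^ 2)]

/-- `G₂ = e^{iπ/9}·[[t², t, −t²], [t, 0, t], [−t², t, t²]]` -/
noncomputable def G₂ : Matrix (Fin 3) (Fin 3) ℂ :=
  Complex.exp ((Real.pi : ℂ) * Complex.I / 9) •
    !![t ^ 2, t, -t ^ 2; t, 0, t; -t ^ 2, t, t ^ 2]

/- ===================== auxiliary definitions ===================== -/

noncomputable def cC : ℂ := Complex.exp ((Real.pi : ℂ) * Complex.I / 9)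

noncomputable def rR : ℂ := (Real.sqrt 2 : ℂ)

noncomputable def Mm (c r : ℂ) : Matrix (Fin 3) (Fin 3) ℂ :=
  !![c^13/2, r*c^7/2, -(c^13/2); r*c^7/2, 0, r*c^7/2; -(c^13/2), r*c^7/2, c^13/2]
noncomputable def Sm (c : ℂ) : Matrix (Fin 3) (Fin 3) ℂ :=
  !![(-c^5 + c^8)/2, 0, (-c^5 - c^8)/2; 0, -c^5, 0; (-c^5 - c^8)/2, 0, (-c^5 + c^8)/2]
noncomputable def S2m (c : ℂ) : Matrix (Fin 3) (Fin 3) ℂ :=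
  !![(-c - c^7)/2, 0, (-c + c^7)/2; 0, -c, 0; (-c + c^7)/2, 0, (-c - c^7)/2]
noncomputable def Bm (w : ℂ) : Matrix (Fin 3) (Fin 3) ℂ :=
  !![(1+w)/2, 0, (w-1)/2; 0, w^2, 0; (w-1)/2, 0, (1+w)/2]
noncomputable def Dm (c : ℂ) : Matrix (Fin 3) (Fin 3) ℂ :=
  !![c^7, 0, 0; 0, c^13, 0; 0, 0, -(c^7)]

/- ===================== matrix computations ===================== -/

set_option maxHeartbeats 1000000 in
lemma key2 (c r : ℂ) (hc : c^9 = -1) (hr : r^2 = 2) : Mm c r * Mm c r = Sm c := by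
  ext i j
  fin_cases i <;> fin_cases j <;> simp [Mm, Sm, Matrix.mul_apply, Fin.sum_univ_three]
  · linear_combination (c^5*r^2/4 - c^8/2 + c^17/2) * hc + (-c^5/4) * hr
  · linear_combination (c^5*r^2/4 + c^8/2 - c^17/2) * hc + (-c^5/4) * hr
  · linear_combination (c^5*r^2/2) * hc + (-c^5/2) * hr
  · linear_combination (c^5*r^2/4 + c^8/2 - c^17/2) * hc + (-c^5/4) * hr
  · linear_combination (c^5*r^2/4 - c^8/2 + c^17/2) * hc + (-c^5/4) * hr

set_option maxHeartbeats 1000000 in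
lemma key4 (c : ℂ) (hc : c^9 = -1) : Sm c * Sm c = S2m c := by
  ext i j
  fin_cases i <;> fin_cases j <;> simp [Sm, S2m, Matrix.mul_apply, Fin.sum_univ_three]
  · linear_combination (c/2 + c^7/2) * hc
  · linear_combination (c/2 - c^7/2) * hc
  · linear_combination c * hc
  · linear_combination (c/2 - c^7/2) * hc
  · linear_combination (c/2 + c^7/2) * hc

set_option maxHeartbeats 1000000 in
lemma key6 (c : ℂ) (hc : c^9 = -1) : S2m c * Sm c = c^6 • 1 := by
  ext i j
  fin_cases i <;> fin_cases j <;>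
    simp [Sm, S2m, Matrix.mul_apply, Fin.sum_univ_three, Matrix.one_apply,
      Matrix.smul_apply, Matrix.vecHead, Matrix.vecTail]
  · linear_combination (-c^6/2) * hc
  · linear_combination (c^6/2) * hc
  · ring
  · linear_combination (c^6/2) * hc
  · linear_combination (-c^6/2) * hc

set_option maxHeartbeats 2000000 in
lemma keyB (c : ℂ) (hc : c^9 = -1) : Dm c * S2m c * Dm c = c^6 • Bm (c^6) := by
  have h1 : Dm c * S2m c = !![c^7 * ((-c - c^7)/2), 0, c^7 * ((-c + c^7)/2);
      0, c^13 * (-c), 0;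
      -(c^7) * ((-c + c^7)/2), 0, -(c^7) * ((-c - c^7)/2)] := by
    ext i j
    fin_cases i <;> fin_cases j <;>
      simp [Dm, S2m, Matrix.mul_apply, Fin.sum_univ_three, Matrix.vecHead, Matrix.vecTail]
  rw [h1]
  ext i j
  fin_cases i <;> fin_cases j <;>
    simp [Dm, S2m, Bm, Matrix.mul_apply, Fin.sum_univ_three, Matrix.smul_apply,
      Matrix.vecHead, Matrix.vecTail]
  · linear_combination (-c^6/2 - c^12/2) * hc
  · linear_combination (c^6/2 - c^12/2) * hc
  · linear_combination (-c^18) * hc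
  · linear_combination (c^6/2 - c^12/2) * hc
  · linear_combination (-c^6/2 - c^12/2) * hc

set_option maxHeartbeats 1000000 in
lemma keyB3 (w : ℂ) (hw : w^3 = 1) : Bm w * Bm w * Bm w = 1 := by
  ext i j
  fin_cases i <;> fin_cases j <;> simp [Bm, Matrix.mul_apply, Fin.sum_univ_three, Matrix.one_apply]
  · linear_combination (1/2 : ℂ) * hw
  · linear_combination (1/2 : ℂ) * hw
  · linear_combination (w^3 + 1) * hw
  · linear_combination (1/2 : ℂ) * hw
  · linear_combination (1/2 : ℂ) * hw

/- ===================== scalar facts ===================== -/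

lemma hc9 : cC^9 = -1 := by
  rw [cC, ← Complex.exp_nat_mul, show ((9:ℕ):ℂ) * ((Real.pi : ℂ) * Complex.I / 9)
    = (Real.pi : ℂ) * Complex.I by push_cast; ring, Complex.exp_pi_mul_I]

lemma hr2 : rR^2 = 2 := by
  rw [rR, ← Complex.ofReal_pow, Real.sq_sqrt (by norm_num : (0:ℝ) ≤ 2)]; norm_num

lemma hw6 : Complex.exp (2 * (Real.pi : ℂ) * Complex.I / 3) = cC^6 := by
  rw [cC, ← Complex.exp_nat_mul]; congr 1; push_cast; ring

lemma ht : t = rR/2 * cC^6 := by rw [t, rR, hw6]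

lemma ht2 : t^2 = cC^12/2 := by rw [ht]; linear_combination (cC^12/4) * hr2

lemma harg : (starRingEnd ℂ) (2 * (Real.pi:ℂ) * Complex.I / 3)
    = -(2 * (Real.pi:ℂ) * Complex.I / 3) := by
  simp only [map_div₀, _root_.map_mul, map_ofNat, Complex.conj_ofReal, Complex.conj_I]
  ring

lemma hconj1 : (starRingEnd ℂ) t = (rR/2) * Complex.exp (-(2 * (Real.pi : ℂ) * Complex.I / 3)) := by
  rw [t, rR, _root_.map_mul, ← Complex.exp_conj, harg]
  congr 1
  simp [map_div₀, Complex.conj_ofReal, map_ofNat]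

lemma hconj2 : (starRingEnd ℂ) t ^ 2 = cC^6 / 2 := by
  rw [hconj1, mul_pow]
  have h2 : Complex.exp (-(2 * (Real.pi : ℂ) * Complex.I / 3))^2
      = Complex.exp (-(4 * (Real.pi : ℂ) * Complex.I / 3)) := by
    rw [← Complex.exp_nat_mul]; congr 1; push_cast; ring
  have h3 : Complex.exp (-(4 * (Real.pi : ℂ) * Complex.I / 3))
      = Complex.exp (2 * (Real.pi : ℂ) * Complex.I / 3) := by
    rw [Complex.exp_eq_exp_iff_exists_int]
    exact ⟨-1, by push_cast; ring⟩
  rw [h2, h3, hw6]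
  linear_combination (cC^6/4) * hr2

lemma homega3 : (cC^6)^3 = 1 := by
  have h : (cC^6)^3 = (cC^9)^2 := by ring
  rw [h, hc9]; norm_num

lemma two_pi_I_ne : (2 * (Real.pi : ℂ) * Complex.I) ≠ 0 := by
  simp [Real.pi_ne_zero, Complex.I_ne_zero, Complex.ofReal_ne_zero]

lemma homega_ne : cC^6 ≠ 1 := by
  intro h
  rw [← hw6, Complex.exp_eq_one_iff] at h
  obtain ⟨k, hk⟩ := h
  have h3 : (2 * (Real.pi : ℂ) * Complex.I) * 1 = (2 * (Real.pi : ℂ) * Complex.I) * (3*k) := by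
    rw [mul_one]; linear_combination 3*hk
  have h4 : (1:ℂ) = 3*k := mul_left_cancel₀ two_pi_I_ne h3
  have h5 : ((3*k : ℤ) : ℂ) = ((1:ℤ) : ℂ) := by push_cast; linear_combination -h4
  have h6 : (3*k : ℤ) = 1 := Int.cast_injective h5
  omega

lemma homega2_ne : (cC^6)^2 ≠ 1 := by
  intro h
  apply homega_ne
  have h1 : cC^6 = ((cC^6)^2)^2 := by linear_combination (-(cC^6)) * homega3
  rw [h, one_pow] at h1
  exact h1

/- ===================== bridging lemmas ===================== -/

lemma hG2m : G₂ = Mm cC rR := by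
  have hcc : Complex.exp ((Real.pi : ℂ) * Complex.I / 9) = cC := rfl
  rw [G₂]
  simp only [ht2]
  ext i j
  fin_cases i <;> fin_cases j <;>
    simp [Mm, hcc, ht, Matrix.smul_apply, Matrix.vecHead, Matrix.vecTail]
  all_goals ring

lemma hG1m : G₁ = Dm cC := by
  have hcc : Complex.exp ((Real.pi : ℂ) * Complex.I / 9) = cC := rfl
  ext i j
  fin_cases i <;> fin_cases j <;>
    simp [G₁, Dm, hcc, hconj2, ht2, Matrix.smul_apply, Matrix.diagonal,
      Matrix.vecHead, Matrix.vecTail]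
  all_goals ring

/- ===================== the scalar unit ω·I ===================== -/

noncomputable def wu : GL (Fin 3) ℂ where
  val := (cC^6) • 1
  inv := ((cC^6)^2) • 1
  val_inv := by
    rw [Matrix.smul_mul, Matrix.mul_smul, smul_smul, mul_one,
      show cC^6 * (cC^6)^2 = (cC^6)^3 by ring, homega3, one_smul]
  inv_val := by
    rw [Matrix.smul_mul, Matrix.mul_smul, smul_smul, mul_one,
      show (cC^6)^2 * cC^6 = (cC^6)^3 by ring, homega3, one_smul]

lemma wu_zpow (k : ℤ) :
    ∃ z : ℂ, ((wu ^ k : GL (Fin 3) ℂ) : Matrix (Fin 3) (Fin 3) ℂ) = z • 1 := by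
  induction k using Int.induction_on with
  | zero => exact ⟨1, by simp⟩
  | succ n ih =>
    obtain ⟨z, hz⟩ := ih
    refine ⟨z * cC^6, ?_⟩
    rw [_root_.zpow_add_one, Units.val_mul, hz,
      show ((wu : GL (Fin 3) ℂ) : Matrix (Fin 3) (Fin 3) ℂ) = (cC^6) • 1 from rfl,
      Matrix.smul_mul, Matrix.mul_smul, smul_smul, mul_one]
  | pred n ih =>
    obtain ⟨z, hz⟩ := ih
    refine ⟨z * (cC^6)^2, ?_⟩
    rw [_root_.zpow_sub_one, Units.val_mul, hz,
      show ((wu⁻¹ : GL (Fin 3) ℂ) : Matrix (Fin 3) (Fin 3) ℂ) = ((cC^6)^2) • 1 from rfl,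
      Matrix.smul_mul, Matrix.mul_smul, smul_smul, mul_one]

lemma conj_cube (g u : GL (Fin 3) ℂ) : (g * u * g⁻¹)^3 = g * u^3 * g⁻¹ := by
  simp [pow_succ, pow_zero, one_mul, mul_assoc, inv_mul_cancel_left]

/- ===================== main theorem ===================== -/

theorem stmt10 (g₁ g₂ : GL (Fin 3) ℂ)
    (hg₁ : (g₁ : Matrix (Fin 3) (Fin 3) ℂ) = G₁)
    (hg₂ : (g₂ : Matrix (Fin 3) (Fin 3) ℂ) = G₂) :
    Subgroup.zpowers (g₁ * g₂ ^ 2 * g₁⁻¹) ⊓ Subgroup.zpowers (g₁ * g₂⁻¹ ^ 2 * g₁) = ⊥ := by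
  set A : GL (Fin 3) ℂ := g₁ * g₂ ^ 2 * g₁⁻¹ with hA
  set B : GL (Fin 3) ℂ := g₁ * g₂⁻¹ ^ 2 * g₁ with hB
  have hG2_6 : (G₂ : Matrix (Fin 3) (Fin 3) ℂ)^6 = (cC^6) • 1 := by
    have h : G₂^6 = ((G₂*G₂)*(G₂*G₂))*(G₂*G₂) := by
      rw [show (6:ℕ) = 2+2+2 from rfl]
      simp only [pow_add, pow_two]
    rw [h, hG2m, key2 _ _ hc9 hr2, key4 _ hc9, key6 _ hc9]
  have hG2_4 : (G₂ : Matrix (Fin 3) (Fin 3) ℂ)^4 = S2m cC := by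
    have h : G₂^4 = (G₂*G₂)*(G₂*G₂) := by
      rw [show (4:ℕ) = 2+2 from rfl]
      simp only [pow_add, pow_two]
    rw [h, hG2m, key2 _ _ hc9 hr2, key4 _ hc9]
  have h26 : g₂ ^ 6 = wu := by
    apply Units.ext
    rw [Units.val_pow_eq_pow_val, hg₂, hG2_6]
    rfl
  have hA3 : A ^ 3 = wu := by
    have h1 : A ^ 3 = g₁ * (g₂^2)^3 * g₁⁻¹ := by rw [hA, conj_cube]
    have h2 : (g₂^2)^3 = g₂^6 := by rw [← pow_mul]
    rw [h1, h2, h26]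
    apply Units.ext
    rw [Units.val_mul, Units.val_mul,
      show ((wu : GL (Fin 3) ℂ) : Matrix (Fin 3) (Fin 3) ℂ) = (cC^6) • 1 from rfl,
      Matrix.mul_smul, mul_one, Matrix.smul_mul, ← Units.val_mul, mul_inv_cancel]
    rfl
  have hwu3 : wu ^ 3 = 1 := by
    apply Units.ext
    rw [Units.val_pow_eq_pow_val,
      show ((wu : GL (Fin 3) ℂ) : Matrix (Fin 3) (Fin 3) ℂ) = (cC^6) • 1 from rfl,
      smul_pow, one_pow, homega3, one_smul]
    rfl
  have hA9 : A ^ 9 = 1 := by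
    rw [show (9:ℕ) = 3*3 from rfl, pow_mul, hA3, hwu3]
  have hA3ne : A ^ 3 ≠ 1 := by
    rw [hA3]
    intro h
    have h2 : ((wu : GL (Fin 3) ℂ) : Matrix (Fin 3) (Fin 3) ℂ)
        = ((1 : GL (Fin 3) ℂ) : Matrix (Fin 3) (Fin 3) ℂ) := by rw [h]
    rw [show ((wu : GL (Fin 3) ℂ) : Matrix (Fin 3) (Fin 3) ℂ) = (cC^6) • 1 from rfl] at h2
    have h3 := congrFun (congrFun h2 0) 0
    simp [Matrix.smul_apply, Matrix.one_apply] at h3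
    exact homega_ne h3
  have hordA : orderOf A = 9 := by
    have hdvd : orderOf A ∣ 9 := orderOf_dvd_of_pow_eq_one hA9
    have hne3 : ¬ (orderOf A ∣ 3) := fun h => hA3ne (orderOf_dvd_iff_pow_eq_one.mp h)
    have hle : orderOf A ≤ 9 := Nat.le_of_dvd (by norm_num) hdvd
    have hpos : 0 < orderOf A := Nat.pos_of_dvd_of_pos hdvd (by norm_num)
    interval_cases h : orderOf A <;> omega
  have hBval : ((B : GL (Fin 3) ℂ) : Matrix (Fin 3) (Fin 3) ℂ) = Bm (cC^6) := by
    have h1 : B = g₁ * (g₂ ^ 4 * wu⁻¹) * g₁ := by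
      rw [hB, ← h26]
      congr 1
      congr 1
      rw [inv_pow, show (6:ℕ) = 2+4 from rfl, pow_add, _root_.mul_inv_rev, mul_inv_cancel_left]
    rw [h1, Units.val_mul, Units.val_mul, Units.val_mul,
      show ((wu⁻¹ : GL (Fin 3) ℂ) : Matrix (Fin 3) (Fin 3) ℂ) = ((cC^6)^2) • 1 from rfl,
      Matrix.mul_smul, mul_one, Units.val_pow_eq_pow_val, hg₂, hg₁, hG2_4,
      Matrix.mul_smul, Matrix.smul_mul, hG1m, keyB _ hc9, smul_smul,
      show (cC^6)^2 * cC^6 = (cC^6)^3 by ring, homega3, one_smul]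
  have hB3 : B ^ 3 = 1 := by
    apply Units.ext
    rw [Units.val_pow_eq_pow_val, hBval,
      show (Bm (cC^6))^3 = Bm (cC^6) * Bm (cC^6) * Bm (cC^6) by
        simp only [pow_succ, pow_zero, one_mul], keyB3 _ homega3]
    rfl
  have hB3' : B ^ (3:ℤ) = 1 := by
    rw [show ((3:ℤ)) = ((3:ℕ):ℤ) from rfl, _root_.zpow_natCast, hB3]
  rw [eq_bot_iff]
  intro x hx
  rw [Subgroup.mem_inf] at hx
  obtain ⟨hxA, hxB⟩ := hx
  obtain ⟨m, hm⟩ := Subgroup.mem_zpowers_iff.mp hxA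
  obtain ⟨n, hn⟩ := Subgroup.mem_zpowers_iff.mp hxB
  rw [Subgroup.mem_bot]
  have hx3 : x ^ (3:ℤ) = 1 := by
    rw [← hn, ← _root_.zpow_mul, mul_comm n 3, _root_.zpow_mul, hB3', _root_.one_zpow]
  have hAm3 : A ^ (m * 3) = 1 := by rw [_root_.zpow_mul, hm, hx3]
  have h9dvd : ((9:ℕ):ℤ) ∣ m * 3 := by
    rw [← hordA]
    exact orderOf_dvd_iff_zpow_eq_one.mpr hAm3
  have h3dvd : (3:ℤ) ∣ m := by
    push_cast at h9dvd
    omega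
  obtain ⟨k, hk⟩ := h3dvd
  have hxwu : x = wu ^ k := by
    rw [← hm, hk, _root_.zpow_mul,
      show A ^ (3:ℤ) = A ^ (3:ℕ) by exact _root_.zpow_natCast A 3, hA3]
  have hx02 : ((x : GL (Fin 3) ℂ) : Matrix (Fin 3) (Fin 3) ℂ) 0 2 = 0 := by
    obtain ⟨z, hz⟩ := wu_zpow k
    rw [hxwu, hz]
    simp [Matrix.smul_apply, Matrix.one_apply]
  have hn3 : x = B ^ (n % 3) := by
    conv_lhs => rw [← hn, ← Int.mul_ediv_add_emod n 3, _root_.zpow_add, _root_.zpow_mul,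
      hB3', _root_.one_zpow, one_mul]
  have hr0 : n % 3 = 0 ∨ n % 3 = 1 ∨ n % 3 = 2 := by omega
  rcases hr0 with h | h | h
  · rw [hn3, h, zpow_zero]
  · exfalso
    rw [hn3, h, zpow_one] at hx02
    rw [hBval] at hx02
    simp [Bm] at hx02
    apply homega_ne
    first
    | linear_combination 2 * hx02
    | linear_combination hx02
    | linear_combination -2 * hx02
  · exfalso
    rw [hn3, h] at hx02
    rw [show B ^ (2:ℤ) = B ^ (2:ℕ) by exact _root_.zpow_natCast B 2, pow_two] at hx02
    rw [Units.val_mul, hBval] at hx02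
    simp [Bm, Matrix.mul_apply, Fin.sum_univ_three] at hx02
    apply homega2_ne
    first
    | linear_combination 2 * hx02
    | linear_combination hx02
    | linear_combination -2 * hx02
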